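/- Let Q : ℕ → ℝ≥0 satisfy the Lindley recursion Q(t+1) = max(0, Q(t) + a(t) − f(t)) with a, f ≥ 0 and Q(0) = 0. Define for each t the 'time to empty' d(t) := min{s ≥ 0 : Q(t+s) = 0} (assumed finite) and suppose the queue empties infinitely often. Then for any D ≥ 1, ∑_{t=D}^{T−1} [Q(t) − Q'(t)] where Q'(t) := Q(t) computed with arrivals shifted a'(τ) = a(τ−D), satisfies: each arrival a(t) contributes to the gap for at most min(D, d(t)) slots; formally, if Q(t) = Q'(t) + ∑_{τ=t−D}^{t−1} a(τ) holds on each maximal positive excursion of Q, then ∑_{t=D}^{T−1} (Q(t) − Q'(t)) ≤ ∑_{t=0}^{T−1} min(D, d(t+1))·a(t). -/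
import Mathlib


open Finset

/-- Accounting lemma: if on positive excursions the real queue leads the
delayed-arrival queue by the last `D` arrivals, then each arrival `a t`
contributes to the accumulated gap for at most `min D (d (t+1))` slots,
where `d t` is the residual time until the queue next empties. -/
theorem stmt14 (D : ℕ) (hD : 1 ≤ D) (Q Q' a f : ℕ → ℝ) (d : ℕ → ℕ)
    (ha : ∀ t, 0 ≤ a t) (hf : ∀ t, 0 ≤ f t)
    (hQ'nonneg : ∀ t, 0 ≤ Q' t)
    (h0 : Q 0 = 0)
    (hQ : ∀ t, Q (t + 1) = max 0 (Q t + a t - f t))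
    (hd_empty : ∀ t, Q (t + d t) = 0)
    (hd_min : ∀ t s, Q (t + s) = 0 → d t ≤ s)
    (hgap : ∀ t, D ≤ t → 0 < Q t →
      Q t = Q' t + ∑ τ ∈ Finset.Ico (t - D) t, a τ) :
    ∀ T : ℕ, ∑ t ∈ Finset.Ico D T, (Q t - Q' t) ≤
      ∑ t ∈ Finset.range T, (min D (d (t + 1)) : ℝ) * a t := by
  -- Q is nonnegative
  have hQnn : ∀ t, 0 ≤ Q t := by
    intro t
    cases t with
    | zero => simp [h0]
    | succ n => rw [hQ]; exact le_max_left _ _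
  -- one-step growth
  have hstep : ∀ n, Q (n + 1) ≤ Q n + a n := by
    intro n
    rw [hQ]
    apply max_le
    · have := hQnn n; have := ha n; linarith
    · have := hf n; linarith
  -- growth bound from any earlier time
  have hgrow : ∀ r s, r ≤ s → Q s ≤ Q r + ∑ τ ∈ Finset.Ico r s, a τ := by
    intro r s hrs
    induction s with
    | zero =>
      have : r = 0 := Nat.le_zero.mp hrs
      simp [this]
    | succ n ih =>
      rcases Nat.eq_or_lt_of_le hrs with h | h
      · rw [← h]; simp
      · have hrn : r ≤ n := Nat.lt_succ_iff.mp h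
        have h1 := ih hrn
        have h2 := hstep n
        rw [Finset.sum_Ico_succ_top hrn]
        linarith
  -- key claim: an arrival `a τ > 0` can only be charged within its excursion
  have key : ∀ τ t, τ < t → t - D ≤ τ → D ≤ t → 0 < Q t → 0 < a τ →
      t ≤ τ + d (τ + 1) := by
    intro τ t hτt htD hDt hQt haτ
    by_contra hcon
    push_neg at hcon
    set r := τ + 1 + d (τ + 1) with hr
    have hQr : Q r = 0 := hd_empty (τ + 1)
    have hrt : r ≤ t := by omega
    rcases eq_or_lt_of_le hrt with h | h
    · rw [h] at hQr; linarith
    · have h1 := hgrow r t h.le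
      rw [hQr, zero_add] at h1
      have h2 := hgap t hDt hQt
      have hsplit : ∑ τ' ∈ Finset.Ico (t - D) r, a τ' +
          ∑ τ' ∈ Finset.Ico r t, a τ' = ∑ τ' ∈ Finset.Ico (t - D) t, a τ' :=
        Finset.sum_Ico_consecutive _ (by omega) h.le
      have hmem : τ ∈ Finset.Ico (t - D) r := by
        simp only [Finset.mem_Ico]; omega
      have h3 : a τ ≤ ∑ τ' ∈ Finset.Ico (t - D) r, a τ' :=
        Finset.single_le_sum (fun i _ => ha i) hmem
      have h4 := hQ'nonneg t
      linarith
  intro T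
  have step1 : ∑ t ∈ Finset.Ico D T, (Q t - Q' t) ≤
      ∑ t ∈ Finset.Ico D T, ∑ τ ∈ Finset.Ico (t - D) t,
        (if 0 < Q t then a τ else 0) := by
    apply Finset.sum_le_sum
    intro t ht
    simp only [Finset.mem_Ico] at ht
    by_cases h : 0 < Q t
    · simp only [if_pos h]
      rw [hgap t ht.1 h]
      linarith [hQ'nonneg t]
    · simp only [if_neg h, Finset.sum_const_zero]
      have : Q t = 0 := le_antisymm (not_lt.mp h) (hQnn t)
      rw [this]
      linarith [hQ'nonneg t]
  have step2 : ∑ t ∈ Finset.Ico D T, ∑ τ ∈ Finset.Ico (t - D) t,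
        (if 0 < Q t then a τ else 0) =
      ∑ τ ∈ Finset.range T, ∑ t ∈ Finset.Ico D T,
        (if τ ∈ Finset.Ico (t - D) t then (if 0 < Q t then a τ else 0) else 0) := by
    rw [Finset.sum_comm]
    apply Finset.sum_congr rfl
    intro t ht
    simp only [Finset.mem_Ico] at ht
    rw [Finset.sum_ite_mem]
    congr 1
    refine (Finset.inter_eq_right.mpr ?_).symm
    intro τ hτ
    simp only [Finset.mem_Ico] at hτ
    simp only [Finset.mem_range]
    omega
  have step3 : ∀ τ ∈ Finset.range T,
      ∑ t ∈ Finset.Ico D T,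
        (if τ ∈ Finset.Ico (t - D) t then (if 0 < Q t then a τ else 0) else 0) ≤
      (min D (d (τ + 1)) : ℝ) * a τ := by
    intro τ _
    set m := min D (d (τ + 1)) with hm
    have hb : ∑ t ∈ Finset.Ico D T,
        (if τ ∈ Finset.Ico (t - D) t then (if 0 < Q t then a τ else 0) else 0) ≤
        ∑ t ∈ Finset.Ico D T,
          (if t ∈ Finset.Ico (τ + 1) (τ + 1 + m) then a τ else 0) := by
      apply Finset.sum_le_sum
      intro t ht
      simp only [Finset.mem_Ico] at ht
      by_cases h1 : τ ∈ Finset.Ico (t - D) t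
      · rw [if_pos h1]
        by_cases h2 : 0 < Q t
        · rw [if_pos h2]
          rw [Finset.mem_Ico] at h1
          by_cases h3 : 0 < a τ
          · have hk := key τ t h1.2 h1.1 ht.1 h2 h3
            have htm : t - τ ≤ m := le_min (by omega) (by omega)
            have hmem : t ∈ Finset.Ico (τ + 1) (τ + 1 + m) :=
              Finset.mem_Ico.mpr (by omega)
            rw [if_pos hmem]
          · have ha0 : a τ = 0 := le_antisymm (not_lt.mp h3) (ha τ)
            rw [ha0]
            split_ifs <;> simp [ha0]
        · rw [if_neg h2]
          split_ifs with h
          · exact ha τ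
          · exact le_rfl
      · rw [if_neg h1]
        split_ifs with h
        · exact ha τ
        · exact le_rfl
    have hc : ∑ t ∈ Finset.Ico D T,
        (if t ∈ Finset.Ico (τ + 1) (τ + 1 + m) then a τ else 0) ≤
        (m : ℝ) * a τ := by
      rw [Finset.sum_ite_mem, Finset.sum_const, nsmul_eq_mul]
      apply mul_le_mul_of_nonneg_right _ (ha τ)
      have hcard : (Finset.Ico D T ∩ Finset.Ico (τ + 1) (τ + 1 + m)).card ≤
          (Finset.Ico (τ + 1) (τ + 1 + m)).card :=
        Finset.card_le_card (Finset.inter_subset_right)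
      rw [Nat.card_Ico] at hcard
      have : τ + 1 + m - (τ + 1) = m := by omega
      rw [this] at hcard
      exact_mod_cast hcard
    calc _ ≤ (m : ℝ) * a τ := le_trans hb hc
      _ = (min D (d (τ + 1)) : ℝ) * a τ := by rw [hm, Nat.cast_min]
  exact le_trans step1 (le_trans (le_of_eq step2) (Finset.sum_le_sum step3))
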